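/- (Theorem 1) Let M be a von Neumann algebra acting on a complex Hilbert space H, and let a, b ∈ M with 0 ≤ a ≤ 1 and 0 ≤ b ≤ 1 be strict elements satisfying a·b = b·a, a² + b² ≤ 1, and such that a² + b² is strict. Put a₁ = [[a², ab],[ab, 1 − a²]] and b₁ = [[b², −ab],[−ab, 1 − b²]] in M₂(M), the C*-algebra of 2×2 matrices with entries in M. Then 0 ≤ a₁ ≤ I₂, 0 ≤ b₁ ≤ I₂, and a₁ is absolutely compatible with b₁. -/

import Mathlib

set_option maxHeartbeats 1000000
set_option synthInstance.maxHeartbeats 1000000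

/-- A projection: `p = p* = p²`. -/
def IsProj {L : Type*} [Mul L] [Star L] (p : L) : Prop := star p = p ∧ p * p = p

variable {H : Type} [NormedAddCommGroup H] [InnerProductSpace ℂ H] [CompleteSpace H]

/-- An element `a` of a von Neumann algebra `M` (with `0 ≤ a ≤ 1`) is strict in `M` if the only
projection of `M` below `a` is `0` and the only projection of `M` annihilating `a` is `0`. -/
def StrictIn (M : VonNeumannAlgebra H) (a : H →L[ℂ] H) : Prop :=
  (∀ p ∈ M, IsProj p → p ≤ a → p = 0) ∧ (∀ p ∈ M, IsProj p → p * a = 0 → p = 0)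

/-- The Loewner order on `M₂(B(H)) ≅ B(H ⊕ H)`: `X ≤ Y` iff `Y - X` is positive, i.e.
`Y - X = Z* Z` for some `Z`. -/
def MatLE (X Y : Matrix (Fin 2) (Fin 2) (H →L[ℂ] H)) : Prop :=
  ∃ Z : Matrix (Fin 2) (Fin 2) (H →L[ℂ] H), Y - X = star Z * Z

/-- Absolute compatibility `|X - Y| + |1 - X - Y| = 1` in the C*-algebra `M₂(B(H))`, expressed
via the (unique) positive square roots `u` of `(X - Y)* (X - Y)` and `v` of
`(1 - X - Y)* (1 - X - Y)`. -/
def MatAbsCompatible (X Y : Matrix (Fin 2) (Fin 2) (H →L[ℂ] H)) : Prop :=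
  ∃ u v : Matrix (Fin 2) (Fin 2) (H →L[ℂ] H), MatLE 0 u ∧ MatLE 0 v ∧
    u * u = star (X - Y) * (X - Y) ∧ v * v = star (1 - X - Y) * (1 - X - Y) ∧ u + v = 1

/-- Theorem 1: if `a, b` are strict, commuting, `0 ≤ a, b ≤ 1`, `a² + b² ≤ 1`
with `a² + b²` strict in a von Neumann algebra `M`, then
`a₁ = [[a², ab],[ab, 1 - a²]]` and `b₁ = [[b², -ab],[-ab, 1 - b²]]` satisfy
`0 ≤ a₁, b₁ ≤ I₂` and are absolutely compatible in `M₂(M)`. -/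
theorem statement3 (M : VonNeumannAlgebra H) {a b : H →L[ℂ] H}
    (haM : a ∈ M) (hbM : b ∈ M)
    (ha0 : 0 ≤ a) (ha1 : a ≤ 1) (hb0 : 0 ≤ b) (hb1 : b ≤ 1)
    (hsa : StrictIn M a) (hsb : StrictIn M b) (hcomm : a * b = b * a)
    (hsum : a * a + b * b ≤ 1) (hsumstrict : StrictIn M (a * a + b * b)) :
    MatLE 0 !![a * a, a * b; a * b, 1 - a * a] ∧
      MatLE !![a * a, a * b; a * b, 1 - a * a] 1 ∧
      MatLE 0 !![b * b, -(a * b); -(a * b), 1 - b * b] ∧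
      MatLE !![b * b, -(a * b); -(a * b), 1 - b * b] 1 ∧
      MatAbsCompatible !![a * a, a * b; a * b, 1 - a * a]
        !![b * b, -(a * b); -(a * b), 1 - b * b] := by
  have sa : star a = a := (IsSelfAdjoint.of_nonneg ha0).star_eq
  have sb : star b = b := (IsSelfAdjoint.of_nonneg hb0).star_eq
  have hc : Commute a b := hcomm
  have hpos : (0 : H →L[ℂ] H) ≤ 1 - (a * a + b * b) := sub_nonneg.mpr hsum
  set s : H →L[ℂ] H := CFC.sqrt (1 - (a * a + b * b)) with hsdef
  have hs0 : (0 : H →L[ℂ] H) ≤ s := CFC.sqrt_nonneg _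
  have ss : star s = s := (IsSelfAdjoint.of_nonneg hs0).star_eq
  have hs2 : s * s = 1 - (a * a + b * b) := CFC.sqrt_mul_sqrt_self _ hpos
  have h1' : b * a * (b * a) = b * b * (a * a) := hc.mul_mul_mul_comm b a
  have h2 : b * b * (a * a) = a * a * (b * b) :=
    (Commute.mul_left (hc.mul_right hc) (hc.mul_right hc)).symm
  have hba : Commute (b * a) a := Commute.mul_left hc.symm (Commute.refl a)
  have hbb : Commute (b * a) b := Commute.mul_left (Commute.refl b) hc
  have h3 : b * a * (a * a) = a * a * (b * a) := (hba.mul_right hba).eq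
  have h4 : b * a * (b * b) = b * b * (b * a) := (hbb.mul_right hbb).eq
  refine ⟨⟨!![a, b; 0, s], ?_⟩, ⟨!![s, 0; -b, a], ?_⟩, ⟨!![b, -a; 0, s], ?_⟩,
    ⟨!![s, 0; a, b], ?_⟩,
    ⟨!![a * a + b * b, 0; 0, a * a + b * b], !![s * s, 0; 0, s * s],
      ⟨!![a, b; -b, a], ?_⟩, ⟨!![s, 0; 0, s], ?_⟩, ?_, ?_, ?_⟩⟩ <;>
    refine Matrix.ext fun i j => ?_ <;>
    fin_cases i <;> fin_cases j <;>
    simp only [Matrix.one_fin_two, Matrix.mul_apply, Fin.sum_univ_two, Matrix.star_apply,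
      Matrix.sub_apply, Matrix.add_apply, Matrix.zero_apply,
      Matrix.cons_val', Matrix.cons_val_zero, Matrix.cons_val_one, Matrix.head_cons,
      Matrix.head_fin_const, Matrix.empty_val', Matrix.cons_val_fin_one,
      Fin.mk_zero, Fin.mk_one, Fin.isValue, Matrix.of_apply,
      star_sub, star_add, star_neg, star_one, star_zero, star_mul, sa, sb, ss,
      sub_neg_eq_add, neg_mul, mul_neg, neg_neg, hcomm, hs2,
      mul_add, add_mul, mul_sub, sub_mul, one_mul, mul_one, zero_mul, mul_zero,
      h1', h2, h3, h4, sub_zero, add_zero, zero_add, neg_zero, sub_self] <;>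
    first
      | rfl
      | abel
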